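/- Let ν_ij (i,j ∈ {1,…,m}) be positive regular Borel measures on (−∞,0] with finite total variation, ν_ij({0}) = 0, and Σ_{j=1}^m ν_ij((−∞,0]) < 1 for each i, and let D: BU → ℝ^m be defined by D_i x = x_i(0) − Σ_{j=1}^m ∫_{−∞}^0 x_j(s) dν_ij(s). Then the inverse of the operator D̂ is positive: for every x ∈ BU, if Dx_s ≥ 0 (componentwise) for all s ≤ 0, then x(s) ≥ 0 for all s ≤ 0. -/

import Mathlib

open MeasureTheory Filter Set

/-- `x` is bounded and uniformly continuous on `(-∞,0]` (membership in `BU`,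
where only the restriction of `x` to `(-∞,0]` is relevant). -/
def IsBU (m : ℕ) (x : ℝ → Fin m → ℝ) : Prop :=
  (∃ C : ℝ, ∀ s : ℝ, s ≤ 0 → ‖x s‖ ≤ C) ∧
  ∀ ε > (0:ℝ), ∃ δ > (0:ℝ), ∀ s : ℝ, s ≤ 0 → ∀ s' : ℝ, s' ≤ 0 →
    |s - s'| < δ → ‖x s - x s'‖ < ε

/-- the supremum norm `‖x‖_∞ = sup_{s ≤ 0} ‖x(s)‖`. -/
noncomputable def supNorm (m : ℕ) (x : ℝ → Fin m → ℝ) : ℝ :=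
  ⨆ s : Set.Iic (0:ℝ), ‖x (s : ℝ)‖

/-- time shift: `shift m x t = x_t`, where `x_t(s) = x(t+s)`. -/
def shift (m : ℕ) (x : ℝ → Fin m → ℝ) (t : ℝ) : ℝ → Fin m → ℝ :=
  fun s => x (t + s)

/-- The operator `Dx = x(0) - ∫_{-∞}^0 [dν(s)] x(s)`, where the matrix of real
(signed) Borel measures `ν` is given through a positive part `νp` and a
negative part `νn` (Jordan decomposition), i.e. `ν i j = νp i j - νn i j`. -/
noncomputable def Dop (m : ℕ) (νp νn : Fin m → Fin m → Measure ℝ)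
    (x : ℝ → Fin m → ℝ) : Fin m → ℝ :=
  fun i => x 0 i - ∑ j : Fin m,
    ((∫ s in Set.Iic (0:ℝ), x s j ∂(νp i j)) - ∫ s in Set.Iic (0:ℝ), x s j ∂(νn i j))

/-- the measures `ν_ij` have finite total variation and `|ν_ij|({0}) = 0`. -/
def NuCond (m : ℕ) (νp νn : Fin m → Fin m → Measure ℝ) : Prop :=
  (∀ i j, νp i j Set.univ ≠ ⊤) ∧ (∀ i j, νn i j Set.univ ≠ ⊤) ∧
  (∀ i j, νp i j {0} = 0) ∧ (∀ i j, νn i j {0} = 0)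

/-- `D` is stable: there is a continuous `c : [0,∞) → [0,∞)` with `c(t) → 0`
as `t → ∞` such that every continuous `x : ℝ → ℝ^m` with `x_0 ∈ BU` and
`D x_t = 0` for all `t ≥ 0` satisfies `‖x(t)‖ ≤ c(t) ‖x_0‖_∞` for all `t ≥ 0`. -/
def IsStableOp (m : ℕ) (D : (ℝ → Fin m → ℝ) → Fin m → ℝ) : Prop :=
  ∃ c : ℝ → ℝ, ContinuousOn c (Set.Ici 0) ∧ (∀ t : ℝ, 0 ≤ t → 0 ≤ c t) ∧
    Filter.Tendsto c Filter.atTop (nhds 0) ∧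
    ∀ x : ℝ → Fin m → ℝ, Continuous x → IsBU m x →
      (∀ t : ℝ, 0 ≤ t → D (shift m x t) = 0) →
      ∀ t : ℝ, 0 ≤ t → ‖x t‖ ≤ c t * supNorm m x

/-- the convolution operator `D̂`, `(D̂x)(s) = D x_s`. -/
noncomputable def Dhat (m : ℕ) (νp νn : Fin m → Fin m → Measure ℝ)
    (x : ℝ → Fin m → ℝ) : ℝ → Fin m → ℝ :=
  fun s => Dop m νp νn (shift m x s)

/-- the seminorm `‖x‖_n = sup_{s ∈ [-n,0]} ‖x(s)‖`. -/
noncomputable def normOn (m : ℕ) (n : ℕ) (x : ℝ → Fin m → ℝ) : ℝ :=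
  ⨆ s : Set.Icc (-(n:ℝ)) 0, ‖x (s : ℝ)‖

/-- the compact-open metric
`d(x,y) = ∑_{n ≥ 1} 2⁻ⁿ ‖x-y‖_n / (1 + ‖x-y‖_n)`. -/
noncomputable def coDist (m : ℕ) (x y : ℝ → Fin m → ℝ) : ℝ :=
  ∑' n : ℕ, (1/2 : ℝ)^(n+1) *
    (normOn m (n+1) (fun s => x s - y s)) / (1 + normOn m (n+1) (fun s => x s - y s))

/-- `sup_{0 ≤ u ≤ t} ‖h(u)‖`. -/
noncomputable def supOn (m : ℕ) (h : ℝ → Fin m → ℝ) (t : ℝ) : ℝ :=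
  ⨆ u : Set.Icc (0:ℝ) t, ‖h (u : ℝ)‖

/-- the order `x ≤_D y`, i.e. `D x_s ≤ D y_s` (componentwise) for all `s ≤ 0`. -/
def leD (m : ℕ) (νp νn : Fin m → Fin m → Measure ℝ) (x y : ℝ → Fin m → ℝ) : Prop :=
  ∀ s : ℝ, s ≤ 0 → ∀ i, Dhat m νp νn x s i ≤ Dhat m νp νn y s i

/-- For positive `ν_ij` with `ν_ij({0}) = 0` and
`∑_j ν_ij((-∞,0]) < 1` for each `i`, the inverse of `D̂` is positive: if
`x ∈ BU` satisfies `D x_s ≥ 0` (componentwise) for all `s ≤ 0`, then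
`x(s) ≥ 0` for all `s ≤ 0`. -/
theorem statement13 (m : ℕ) (ν : Fin m → Fin m → Measure ℝ)
    (hfin : ∀ i j, ν i j Set.univ ≠ ⊤)
    (hsupp : ∀ i j, ν i j (Set.Ioi 0) = 0)
    (h0 : ∀ i j, ν i j {0} = 0)
    (hsum : ∀ i, ∑ j : Fin m, (ν i j (Set.Iic 0)).toReal < 1)
    (x : ℝ → Fin m → ℝ) (hx : IsBU m x)
    (hpos : ∀ s : ℝ, s ≤ 0 → ∀ i, 0 ≤ Dop m ν (fun _ _ => 0) (shift m x s) i) :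
    ∀ s : ℝ, s ≤ 0 → ∀ i, 0 ≤ x s i := by
  rcases Nat.eq_zero_or_pos m with hm | hm
  · subst hm; intro s hs i; exact i.elim0
  haveI : Nonempty (Fin m) := ⟨⟨0, hm⟩⟩
  obtain ⟨C, hC⟩ := hx.1
  -- continuity of x on Iic 0
  have hxc : ContinuousOn x (Set.Iic (0:ℝ)) := by
    intro a ha
    rw [Metric.continuousWithinAt_iff]
    intro ε hε
    obtain ⟨δ, hδ, h⟩ := hx.2 ε hε
    refine ⟨δ, hδ, fun {y} hy hyd => ?_⟩
    have := h y hy a ha (by rwa [Real.dist_eq] at hyd)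
    rwa [dist_eq_norm]
  -- key inequality from hpos
  have hkey : ∀ s : ℝ, s ≤ 0 → ∀ i,
      (∑ j : Fin m, ∫ u in Set.Iic (0:ℝ), x (s + u) j ∂(ν i j)) ≤ x s i := by
    intro s hs i
    have := hpos s hs i
    simp only [Dop, shift, add_zero, Measure.restrict_zero, integral_zero_measure,
      sub_zero] at this
    linarith
  -- the infimum
  set S : Set ℝ := Set.range (fun p : Set.Iic (0:ℝ) × Fin m => x p.1 p.2) with hS
  have hSne : S.Nonempty := Set.range_nonempty _
  have hSbd : BddBelow S := by
    refine ⟨-C, ?_⟩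
    rintro r ⟨⟨⟨t, ht⟩, j⟩, rfl⟩
    have h1 : ‖x t j‖ ≤ ‖x t‖ := norm_le_pi_norm (x t) j
    have h2 := hC t ht
    have : |x t j| ≤ C := le_trans h1 h2
    simp only
    nlinarith [abs_le.1 this]
  set β : ℝ := sInf S with hβ
  have hlow : ∀ t : ℝ, t ≤ 0 → ∀ j, β ≤ x t j := fun t ht j =>
    csInf_le hSbd ⟨⟨⟨t, ht⟩, j⟩, rfl⟩
  -- β ≥ 0
  have hβ0 : 0 ≤ β := by
    by_contra hb
    push_neg at hb
    set K : ℝ := Finset.univ.sup' Finset.univ_nonempty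
      (fun i : Fin m => ∑ j : Fin m, (ν i j (Set.Iic 0)).toReal) with hK
    have hK1 : K < 1 := by
      rw [hK, Finset.sup'_lt_iff]
      intro i _
      exact hsum i
    have hKi : ∀ i : Fin m, (∑ j : Fin m, (ν i j (Set.Iic 0)).toReal) ≤ K := by
      intro i
      rw [hK]
      exact Finset.le_sup' (fun i : Fin m => ∑ j : Fin m, (ν i j (Set.Iic 0)).toReal)
        (Finset.mem_univ i)
    have hlow2 : ∀ t : ℝ, t ≤ 0 → ∀ i, β * K ≤ x t i := by
      intro s hs i
      have hint : ∀ j : Fin m,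
          β * (ν i j (Set.Iic 0)).toReal ≤ ∫ u in Set.Iic (0:ℝ), x (s + u) j ∂(ν i j) := by
        intro j
        haveI : IsFiniteMeasure (ν i j) := ⟨(hfin i j).lt_top⟩
        have hcont : ContinuousOn (fun u : ℝ => x (s + u) j) (Set.Iic (0:ℝ)) := by
          have hmap : Set.MapsTo (fun u : ℝ => s + u) (Set.Iic (0:ℝ)) (Set.Iic (0:ℝ)) :=
            fun u hu => by
              simp only [Set.mem_Iic] at *
              linarith
          have : ContinuousOn (fun u : ℝ => x (s + u)) (Set.Iic (0:ℝ)) :=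
            hxc.comp (by fun_prop) hmap
          exact (continuous_apply j).comp_continuousOn this
        have hintg : IntegrableOn (fun u : ℝ => x (s + u) j) (Set.Iic (0:ℝ)) (ν i j) := by
          refine Integrable.mono' (integrable_const C)
            (hcont.aestronglyMeasurable measurableSet_Iic) ?_
          refine (ae_restrict_iff' measurableSet_Iic).2 (ae_of_all _ fun u hu => ?_)
          have hsu : s + u ≤ 0 := by
            simp only [Set.mem_Iic] at hu; linarith
          calc ‖x (s + u) j‖ ≤ ‖x (s + u)‖ := norm_le_pi_norm _ j
            _ ≤ C := hC _ hsu
        refine setIntegral_ge_of_const_le_real measurableSet_Iic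
          (measure_ne_top _ _) (fun u hu => ?_) hintg
        have hsu : s + u ≤ 0 := by
          simp only [Set.mem_Iic] at hu; linarith
        exact hlow _ hsu j
      have h1 : β * (∑ j : Fin m, (ν i j (Set.Iic 0)).toReal)
          ≤ ∑ j : Fin m, ∫ u in Set.Iic (0:ℝ), x (s + u) j ∂(ν i j) := by
        rw [Finset.mul_sum]
        exact Finset.sum_le_sum fun j _ => hint j
      have h2 : β * K ≤ β * (∑ j : Fin m, (ν i j (Set.Iic 0)).toReal) :=
        mul_le_mul_of_nonpos_left (hKi i) hb.le
      linarith [hkey s hs i]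
    have hle : β * K ≤ β := le_csInf hSne (by rintro r ⟨⟨⟨t, ht⟩, j⟩, rfl⟩; exact hlow2 t ht j)
    nlinarith [mul_pos (neg_pos.2 hb) (sub_pos.2 hK1)]
  intro s hs i
  exact le_trans hβ0 (hlow s hs i)
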